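/- Let 0 < m ≤ L and α ≥ 0, and let f : ℝⁿ → ℝ be differentiable, m-strongly convex, with L-Lipschitz continuous gradient. Let x* ∈ ℝⁿ satisfy ∇f(x*) = 0. Then for every x ∈ ℝⁿ, ‖x − α∇f(x) − x*‖ ≤ max{|1 − αm|, |1 − αL|} · ‖x − x*‖. -/

import Mathlib

open scoped RealInnerProductSpace

lemma descent_lemma {n : ℕ} (L : ℝ) (hL : 0 ≤ L)
    (f : EuclideanSpace ℝ (Fin n) → ℝ)
    (f' : EuclideanSpace ℝ (Fin n) → EuclideanSpace ℝ (Fin n))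
    (hdiff : ∀ x, HasGradientAt f (f' x) x)
    (hlip : ∀ x y, ‖f' y - f' x‖ ≤ L * ‖y - x‖) (x y : EuclideanSpace ℝ (Fin n)) :
    f y ≤ f x + ⟪f' x, y - x⟫ + (L / 2) * ‖y - x‖ ^ 2 := by
  have hcont : Continuous f' := by
    have : LipschitzWith (Real.toNNReal L) f' := by
      apply LipschitzWith.of_dist_le_mul
      intro a b
      rw [dist_eq_norm, dist_eq_norm, Real.coe_toNNReal L hL]
      exact hlip b a
    exact this.continuous
  set c : ℝ → EuclideanSpace ℝ (Fin n) := fun t => x + t • (y - x) with hcdef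
  have hc : Continuous c := by
    apply continuous_const.add (continuous_id.smul continuous_const)
  have hderiv : ∀ t : ℝ, HasDerivAt (fun t => f (c t)) ⟪f' (c t), y - x⟫ t := by
    intro t
    have h1 : HasDerivAt c (y - x) t := by
      have := ((hasDerivAt_id t).smul_const (y - x)).const_add x
      simpa [hcdef] using this
    have h2 := (hdiff (c t)).hasFDerivAt.comp_hasDerivAt t h1
    have h3 : HasDerivAt (f ∘ c) ⟪f' (c t), y - x⟫ t := by
      simpa [InnerProductSpace.toDual_apply_apply] using h2
    exact h3
  have hInt : IntervalIntegrable (fun t => ⟪f' (c t), y - x⟫)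
      MeasureTheory.volume 0 1 :=
    (Continuous.inner (hcont.comp hc) continuous_const).intervalIntegrable _ _
  have hFTC : ∫ t in (0:ℝ)..1, ⟪f' (c t), y - x⟫ = f (c 1) - f (c 0) :=
    intervalIntegral.integral_eq_sub_of_hasDerivAt (fun t _ => hderiv t) hInt
  have hc0 : c 0 = x := by simp [hcdef]
  have hc1 : c 1 = y := by simp [hcdef]
  have hbound : ∀ t ∈ Set.Icc (0:ℝ) 1,
      ⟪f' (c t), y - x⟫ ≤ ⟪f' x, y - x⟫ + L * t * ‖y - x‖ ^ 2 := by
    intro t ht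
    have h1 : ⟪f' (c t) - f' x, y - x⟫ ≤ ‖f' (c t) - f' x‖ * ‖y - x‖ :=
      real_inner_le_norm _ _
    have h2 : ‖f' (c t) - f' x‖ ≤ L * ‖c t - x‖ := hlip x (c t)
    have h3 : ‖c t - x‖ = t * ‖y - x‖ := by
      simp [hcdef, norm_smul, abs_of_nonneg ht.1]
    have h4 : ⟪f' (c t) - f' x, y - x⟫ = ⟪f' (c t), y - x⟫ - ⟪f' x, y - x⟫ :=
      inner_sub_left _ _ _
    have h5 := mul_le_mul_of_nonneg_right h2 (norm_nonneg (y - x))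
    rw [h3] at h5
    nlinarith [norm_nonneg (y - x)]
  have hInt2 : IntervalIntegrable (fun t => ⟪f' x, y - x⟫ + L * t * ‖y - x‖ ^ 2)
      MeasureTheory.volume 0 1 := by
    apply Continuous.intervalIntegrable
    continuity
  have hmono : ∫ t in (0:ℝ)..1, ⟪f' (c t), y - x⟫ ≤
      ∫ t in (0:ℝ)..1, (⟪f' x, y - x⟫ + L * t * ‖y - x‖ ^ 2) := by
    apply intervalIntegral.integral_mono_on (by norm_num) hInt hInt2
    exact hbound
  have hval : ∫ t in (0:ℝ)..1, (⟪f' x, y - x⟫ + L * t * ‖y - x‖ ^ 2)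
      = ⟪f' x, y - x⟫ + (L / 2) * ‖y - x‖ ^ 2 := by
    have heq : (fun t : ℝ => ⟪f' x, y - x⟫ + L * t * ‖y - x‖ ^ 2)
        = fun t : ℝ => ⟪f' x, y - x⟫ + (L * ‖y - x‖ ^ 2) * t := by
      funext t; ring
    rw [heq, intervalIntegral.integral_add intervalIntegrable_const
      ((intervalIntegral.intervalIntegrable_id).const_mul _),
      intervalIntegral.integral_const, intervalIntegral.integral_const_mul,
      integral_id]
    norm_num
    ring
  rw [hFTC, hc0, hc1] at hmono
  rw [hval] at hmono
  linarith

set_option maxHeartbeats 1000000 in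
theorem stmt_8 {n : ℕ} (m L α : ℝ) (hm : 0 < m) (hmL : m ≤ L) (hα : 0 ≤ α)
    (f : EuclideanSpace ℝ (Fin n) → ℝ)
    (f' : EuclideanSpace ℝ (Fin n) → EuclideanSpace ℝ (Fin n))
    (hdiff : ∀ x, HasGradientAt f (f' x) x)
    (hsc : ∀ x y, f y ≥ f x + ⟪f' x, y - x⟫ + (m / 2) * ‖y - x‖ ^ 2)
    (hlip : ∀ x y, ‖f' y - f' x‖ ≤ L * ‖y - x‖)
    (xstar : EuclideanSpace ℝ (Fin n)) (hstar : f' xstar = 0) :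
    ∀ x, ‖x - α • f' x - xstar‖ ≤ max |1 - α * m| |1 - α * L| * ‖x - xstar‖ := by
  have hL : 0 ≤ L := le_trans hm.le hmL
  have hdesc := descent_lemma L hL f f' hdiff hlip
  intro x
  set u : EuclideanSpace ℝ (Fin n) := x - xstar with hu
  set g : EuclideanSpace ℝ (Fin n) := f' x with hg
  set M : ℝ := max |1 - α * m| |1 - α * L| with hM
  have hMnn : 0 ≤ M := le_trans (abs_nonneg _) (le_max_left _ _)
  clear_value u g M
  -- basic inner product facts
  have hA : m * ‖u‖ ^ 2 ≤ ⟪g, u⟫ := by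
    have h1 := hsc x xstar
    have h2 := hsc xstar x
    rw [hstar] at h2
    rw [← hg] at h1
    rw [← hu] at h2
    have e1 : ⟪g, xstar - x⟫ = -⟪g, u⟫ := by
      rw [hu, ← inner_neg_right]; congr 1; abel
    have e2 : ‖xstar - x‖ = ‖u‖ := by rw [hu, norm_sub_rev]
    have e3 : ⟪(0 : EuclideanSpace ℝ (Fin n)), u⟫ = (0:ℝ) :=
      inner_zero_left _
    rw [e1, e2] at h1
    rw [e3] at h2
    nlinarith [h1, h2]
  have hC : ⟪g, u⟫ ≤ L * ‖u‖ ^ 2 := by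
    have h1 : ⟪g, u⟫ ≤ ‖g‖ * ‖u‖ := real_inner_le_norm _ _
    have h2 : ‖g‖ ≤ L * ‖u‖ := by
      have := hlip xstar x
      rw [hstar, sub_zero, ← hg, ← hu] at this
      exact this
    nlinarith [norm_nonneg u, mul_le_mul_of_nonneg_right h2 (norm_nonneg u)]
  -- the key inequality via descent + strong convexity
  set Δ : EuclideanSpace ℝ (Fin n) := g - m • u with hΔ
  clear_value Δ
  have hiΔu : ⟪Δ, u⟫ = ⟪g, u⟫ - m * ‖u‖ ^ 2 := by
    rw [hΔ, inner_sub_left, real_inner_smul_left, real_inner_self_eq_norm_sq]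
  have hiΔΔ : ⟪g, Δ⟫ = ‖Δ‖ ^ 2 + m * ⟪u, Δ⟫ := by
    have : g = Δ + m • u := by rw [hΔ]; abel
    rw [this, inner_add_left, real_inner_smul_left, real_inner_self_eq_norm_sq]
  have key : ∀ t : ℝ, 0 ≤ t → (2 * t - (L - m) * t ^ 2) * ‖Δ‖ ^ 2 ≤ ⟪Δ, u⟫ := by
    intro t ht
    have I1 := hsc xstar (x - t • Δ)
    have I2 := hdesc x (x - t • Δ)
    have I3 := hsc x (xstar + t • Δ)
    have I4 := hdesc xstar (xstar + t • Δ)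
    rw [hstar] at I1 I4
    rw [← hg] at I2 I3
    have ez1 : x - t • Δ - xstar = u - t • Δ := by rw [hu]; abel
    have ez2 : x - t • Δ - x = -(t • Δ) := by abel
    have ez3 : xstar + t • Δ - x = t • Δ - u := by rw [hu]; abel
    have ez4 : xstar + t • Δ - xstar = t • Δ := by abel
    rw [ez1] at I1
    rw [ez2] at I2
    rw [ez3] at I3
    rw [ez4] at I4
    have n1 : ‖u - t • Δ‖ ^ 2 = ‖u‖ ^ 2 - 2 * (t * ⟪u, Δ⟫) + t ^ 2 * ‖Δ‖ ^ 2 := by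
      rw [norm_sub_sq_real, real_inner_smul_right, norm_smul, Real.norm_eq_abs,
        mul_pow, sq_abs]
    have n2 : ‖t • Δ - u‖ ^ 2 = ‖u‖ ^ 2 - 2 * (t * ⟪u, Δ⟫) + t ^ 2 * ‖Δ‖ ^ 2 := by
      rw [norm_sub_rev]; exact n1
    have n3 : ‖-(t • Δ)‖ ^ 2 = t ^ 2 * ‖Δ‖ ^ 2 := by
      rw [norm_neg, norm_smul, Real.norm_eq_abs, mul_pow, sq_abs]
    have n4 : ‖t • Δ‖ ^ 2 = t ^ 2 * ‖Δ‖ ^ 2 := by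
      rw [norm_smul, Real.norm_eq_abs, mul_pow, sq_abs]
    have i1 : ⟪(0 : EuclideanSpace ℝ (Fin n)), u - t • Δ⟫ = (0:ℝ) := inner_zero_left _
    have i2 : ⟪g, -(t • Δ)⟫ = -(t * ⟪g, Δ⟫) := by
      rw [inner_neg_right, real_inner_smul_right]
    have i3 : ⟪g, t • Δ - u⟫ = t * ⟪g, Δ⟫ - ⟪g, u⟫ := by
      rw [inner_sub_right, real_inner_smul_right]
    have i4 : ⟪(0 : EuclideanSpace ℝ (Fin n)), t • Δ⟫ = (0:ℝ) := inner_zero_left _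
    rw [i1, n1] at I1
    rw [i2, n3] at I2
    rw [i3, n2] at I3
    rw [i4, n4] at I4
    have hcomm : ⟪u, Δ⟫ = ⟪Δ, u⟫ := real_inner_comm _ _
    have hgu : ⟪g, u⟫ = ⟪Δ, u⟫ + m * ‖u‖ ^ 2 := by rw [hiΔu]; ring
    rw [hiΔΔ, hcomm] at I2 I3
    rw [hgu] at I3
    rw [hcomm] at I1
    linarith [I1, I2, I3, I4]
  -- sector inequality
  have hsector : ‖Δ‖ ^ 2 ≤ (L - m) * ⟪Δ, u⟫ := by
    rcases lt_or_eq_of_le hmL with hlt | heq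
    · have hL' : 0 < L - m := by linarith
      have := key (1 / (L - m)) (by positivity)
      have harith : (2 * (1 / (L - m)) - (L - m) * (1 / (L - m)) ^ 2) = 1 / (L - m) := by
        field_simp
        ring
      rw [harith] at this
      calc ‖Δ‖ ^ 2 = (L - m) * ((1 / (L - m)) * ‖Δ‖ ^ 2) := by field_simp
        _ ≤ (L - m) * ⟪Δ, u⟫ := by
            apply mul_le_mul_of_nonneg_left _ hL'.le
            exact this
    · have hzero : ‖Δ‖ ^ 2 = 0 := by
        by_contra hne
        have hpos : 0 < ‖Δ‖ ^ 2 := lt_of_le_of_ne (by positivity) (Ne.symm hne)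
        have h0 : (0:ℝ) ≤ ⟪Δ, u⟫ := by linarith [key 0 le_rfl]
        have ht : 0 ≤ ⟪Δ, u⟫ / (2 * ‖Δ‖ ^ 2) + 1 := by
          have := div_nonneg h0 (by positivity : (0:ℝ) ≤ 2 * ‖Δ‖ ^ 2)
          linarith
        have hk := key (⟪Δ, u⟫ / (2 * ‖Δ‖ ^ 2) + 1) ht
        rw [← heq, sub_self] at hk
        have hh : (2 * (⟪Δ, u⟫ / (2 * ‖Δ‖ ^ 2) + 1) - 0 * (⟪Δ, u⟫ / (2 * ‖Δ‖ ^ 2) + 1) ^ 2)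
            * ‖Δ‖ ^ 2 = ⟪Δ, u⟫ + 2 * ‖Δ‖ ^ 2 := by
          have hΔne : ‖Δ‖ ≠ 0 := fun h => hne (by rw [h]; ring)
          field_simp
          ring
        rw [hh] at hk
        linarith
      rw [← heq, sub_self, zero_mul, hzero]
  have hS : ‖g‖ ^ 2 + m * L * ‖u‖ ^ 2 ≤ (m + L) * ⟪g, u⟫ := by
    have hΔsq : ‖Δ‖ ^ 2 = ‖g‖ ^ 2 - 2 * (m * ⟪g, u⟫) + m ^ 2 * ‖u‖ ^ 2 := by
      rw [hΔ, norm_sub_sq_real, real_inner_smul_right, norm_smul, Real.norm_eq_abs,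
        mul_pow, sq_abs]
    rw [hΔsq, hiΔu] at hsector
    nlinarith [hsector]
  -- final algebra
  have hvec : x - α • g - xstar = u - α • g := by rw [hu]; abel
  rw [hvec]
  have hexp : ‖u - α • g‖ ^ 2 = ‖u‖ ^ 2 - 2 * (α * ⟪g, u⟫) + α ^ 2 * ‖g‖ ^ 2 := by
    rw [norm_sub_sq_real, real_inner_smul_right, norm_smul, Real.norm_eq_abs,
      mul_pow, sq_abs, real_inner_comm u g]
  have hsq : ‖u - α • g‖ ^ 2 ≤ (M * ‖u‖) ^ 2 := by
    rcases le_total (α ^ 2 * (m + L)) (2 * α) with hc | hc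
    · have hMm : (1 - α * m) ^ 2 ≤ M ^ 2 := by
        have h1 : |1 - α * m| ≤ M := by rw [hM]; exact le_max_left _ _
        have := pow_le_pow_left₀ (abs_nonneg (1 - α * m)) h1 2
        rwa [sq_abs] at this
      have hstep : ‖u - α • g‖ ^ 2 ≤ (1 - α * m) ^ 2 * ‖u‖ ^ 2 := by
        have p1 := mul_le_mul_of_nonneg_left hS (sq_nonneg α)
        have p2 : 0 ≤ (2 * α - α ^ 2 * (m + L)) * (⟪g, u⟫ - m * ‖u‖ ^ 2) :=
          mul_nonneg (by linarith) (by linarith)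
        rw [hexp]
        nlinarith [p1, p2]
      calc ‖u - α • g‖ ^ 2 ≤ (1 - α * m) ^ 2 * ‖u‖ ^ 2 := hstep
        _ ≤ M ^ 2 * ‖u‖ ^ 2 := mul_le_mul_of_nonneg_right hMm (sq_nonneg _)
        _ = (M * ‖u‖) ^ 2 := by ring
    · have hMm : (1 - α * L) ^ 2 ≤ M ^ 2 := by
        have h1 : |1 - α * L| ≤ M := by rw [hM]; exact le_max_right _ _
        have := pow_le_pow_left₀ (abs_nonneg (1 - α * L)) h1 2
        rwa [sq_abs] at this
      have hstep : ‖u - α • g‖ ^ 2 ≤ (1 - α * L) ^ 2 * ‖u‖ ^ 2 := by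
        have p1 := mul_le_mul_of_nonneg_left hS (sq_nonneg α)
        have p2 : 0 ≤ (α ^ 2 * (m + L) - 2 * α) * (L * ‖u‖ ^ 2 - ⟪g, u⟫) :=
          mul_nonneg (by linarith) (by linarith)
        rw [hexp]
        nlinarith [p1, p2]
      calc ‖u - α • g‖ ^ 2 ≤ (1 - α * L) ^ 2 * ‖u‖ ^ 2 := hstep
        _ ≤ M ^ 2 * ‖u‖ ^ 2 := mul_le_mul_of_nonneg_right hMm (sq_nonneg _)
        _ = (M * ‖u‖) ^ 2 := by ring
  have := Real.sqrt_le_sqrt hsq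
  rwa [Real.sqrt_sq (norm_nonneg _), Real.sqrt_sq (mul_nonneg hMnn (norm_nonneg _))]
    at this
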